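/- Fix P ⊆ {1,…,n−1}. Let v ∈ W^P, w ∈ W_P, and u ∈ W, and suppose that the pointwise product of Schubert classes σ_v·σ_w equals the single Schubert class σ_u as functions W → R (i.e. σ_v(z)·σ_w(z) = σ_u(z) for all z ∈ W). Then u = vw. -/

import Mathlib

noncomputable section

open MvPolynomial
open scoped Classical

/-- The polynomial ring `R = ℂ[x₁, …, xₙ]`. -/
abbrev BilleyR (n : ℕ) := MvPolynomial (Fin n) ℂ

/-- The simple transposition `sᵢ = (i, i+1)` in the symmetric group on `{1, …, n}`. -/
def sTr (n : ℕ) (i : Fin (n - 1)) : Equiv.Perm (Fin n) :=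
  Equiv.swap ⟨i.1, by have := i.isLt; omega⟩ ⟨i.1 + 1, by have := i.isLt; omega⟩

/-- The length `ℓ(w)`: the minimal `k` such that `w` is a product of `k` simple
transpositions. -/
def len (n : ℕ) (w : Equiv.Perm (Fin n)) : ℕ :=
  sInf {k | ∃ l : List (Fin (n - 1)), l.length = k ∧ (l.map (sTr n)).prod = w}

/-- `l` is a reduced word for `w`: the product of the corresponding simple transpositions
is `w` and the length of `l` is `ℓ(w)`. -/
def IsRedWord (n : ℕ) (l : List (Fin (n - 1))) (w : Equiv.Perm (Fin n)) : Prop :=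
  (l.map (sTr n)).prod = w ∧ l.length = len n w

/-- The simple root `αᵢ = xᵢ - x_{i+1}`. -/
def alphaR (n : ℕ) (i : Fin (n - 1)) : BilleyR n :=
  X ⟨i.1, by have := i.isLt; omega⟩ - X ⟨i.1 + 1, by have := i.isLt; omega⟩

/-- Given a word `b = (b₁, …, b_m)`, the polynomial
`r(j, u) = (s_{b₁} ⋯ s_{b_{j-1}})(α_{b_j})` (with `j` zero-indexed here). -/
def rPoly (n : ℕ) (b : List (Fin (n - 1))) (j : Fin b.length) : BilleyR n :=
  rename (⇑(((b.take j.1).map (sTr n)).prod)) (alphaR n (b.get j))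

/-- Billey's formula with respect to the word `b` for `u`:
`σ_v(u) = Σ ∏ₜ r(jₜ, u)`, summed over all strictly increasing index sequences
`j₁ < ⋯ < j_{ℓ(v)}` into `b` such that `s_{b_{j₁}} ⋯ s_{b_{j_{ℓ(v)}}} = v`. -/
def billeyWord (n : ℕ) (b : List (Fin (n - 1))) (v : Equiv.Perm (Fin n)) : BilleyR n :=
  ∑ J ∈ Finset.univ.filter (fun J : Finset (Fin b.length) =>
      J.card = len n v ∧
        ((J.sort (· ≤ ·)).map (fun j => sTr n (b.get j))).prod = v),
    ∏ j ∈ J, rPoly n b j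

/-- The Billey polynomial `σ_v(u)`, computed from a choice of reduced word for `u`
(its value is independent of this choice). -/
def sigma (n : ℕ) (v u : Equiv.Perm (Fin n)) : BilleyR n :=
  if h : ∃ b : List (Fin (n - 1)), IsRedWord n b u then billeyWord n h.choose v else 0

/-- The standard parabolic subgroup `W_P` generated by `{sᵢ : i ∈ P}`. -/
def WPar (n : ℕ) (P : Set (Fin (n - 1))) : Subgroup (Equiv.Perm (Fin n)) :=
  Subgroup.closure (sTr n '' P)

/-- The set `W^P` of minimal-length coset representatives of `W / W_P`. -/
def minReps (n : ℕ) (P : Set (Fin (n - 1))) : Set (Equiv.Perm (Fin n)) :=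
  {v | ∀ u ∈ WPar n P, len n v ≤ len n (v * u)}

namespace BilleyAux

variable {n : ℕ}

def eA (n : ℕ) (i : Fin (n-1)) : Fin n := ⟨i.1, by have := i.isLt; omega⟩
def eB (n : ℕ) (i : Fin (n-1)) : Fin n := ⟨i.1 + 1, by have := i.isLt; omega⟩

lemma sTr_eq (i : Fin (n-1)) : sTr n i = Equiv.swap (eA n i) (eB n i) := rfl

lemma eA_lt_eB (i : Fin (n-1)) : eA n i < eB n i := by
  simp [eA, eB, Fin.lt_def]

lemma sTr_mul_self (i : Fin (n-1)) : sTr n i * sTr n i = 1 := by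
  rw [sTr_eq, Equiv.swap_mul_self]

lemma sTr_apply_val (i : Fin (n-1)) (x : Fin n) :
    (sTr n i x).1 = if x.1 = i.1 then i.1 + 1 else if x.1 = i.1 + 1 then i.1 else x.1 := by
  rw [sTr_eq, Equiv.swap_apply_def]
  have hA : (x = eA n i) ↔ x.1 = i.1 := by rw [Fin.ext_iff]; rfl
  have hB : (x = eB n i) ↔ x.1 = i.1 + 1 := by rw [Fin.ext_iff]; rfl
  split_ifs with h1 h2 <;>
    simp_all [eA, eB]

lemma sTr_pair_lt {i : Fin (n-1)} {p q : Fin n} (hpq : p < q)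
    (hne : ¬(p.1 = i.1 ∧ q.1 = i.1 + 1)) : sTr n i p < sTr n i q := by
  rw [Fin.lt_def] at hpq ⊢
  rw [sTr_apply_val, sTr_apply_val]
  split_ifs <;> omega

def wp (n : ℕ) (l : List (Fin (n-1))) : Equiv.Perm (Fin n) := (l.map (sTr n)).prod

lemma wp_nil : wp n [] = 1 := rfl

lemma wp_append (l l' : List (Fin (n-1))) : wp n (l ++ l') = wp n l * wp n l' := by
  simp [wp]

lemma wp_concat (l : List (Fin (n-1))) (i : Fin (n-1)) :
    wp n (l ++ [i]) = wp n l * sTr n i := by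
  simp [wp]

lemma wp_cons (i : Fin (n-1)) (l : List (Fin (n-1))) :
    wp n (i :: l) = sTr n i * wp n l := by
  simp [wp]

def invSet (n : ℕ) (w : Equiv.Perm (Fin n)) : Finset (Fin n × Fin n) :=
  Finset.univ.filter (fun p => p.1 < p.2 ∧ w p.2 < w p.1)

def inv (n : ℕ) (w : Equiv.Perm (Fin n)) : ℕ := (invSet n w).card

lemma mem_invSet {w : Equiv.Perm (Fin n)} {p : Fin n × Fin n} :
    p ∈ invSet n w ↔ p.1 < p.2 ∧ w p.2 < w p.1 := by
  simp [invSet]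

lemma inv_one : inv n 1 = 0 := by
  rw [inv, Finset.card_eq_zero]
  ext p
  simp only [mem_invSet, Finset.notMem_empty, iff_false]
  rintro ⟨h1, h2⟩
  simp only [Equiv.Perm.one_apply] at h2
  exact absurd h1 (not_lt.2 h2.le)

/-- the key counting step: right multiplication by a simple transposition -/
lemma inv_mul_sTr_of_lt {w : Equiv.Perm (Fin n)} {i : Fin (n-1)}
    (h : w (eA n i) < w (eB n i)) : inv n (w * sTr n i) = inv n w + 1 := by
  classical
  set a := eA n i
  set b := eB n i
  have hab : a < b := eA_lt_eB i
  have hsa : sTr n i a = b := by rw [sTr_eq]; exact Equiv.swap_apply_left _ _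
  have hsb : sTr n i b = a := by rw [sTr_eq]; exact Equiv.swap_apply_right _ _
  -- (a,b) is an inversion of w * sTr i but not of w
  have hmem : (a, b) ∈ invSet n (w * sTr n i) := by
    rw [mem_invSet]
    exact ⟨hab, by simpa [Equiv.Perm.mul_apply, hsa, hsb] using h⟩
  have hnmem : (a, b) ∉ invSet n w := by
    rw [mem_invSet]
    rintro ⟨-, h2⟩
    exact absurd h (not_lt.2 h2.le)
  -- the bijection on the rest
  have key : ((invSet n (w * sTr n i)).erase (a, b)).card = ((invSet n w).erase (a, b)).card := by
    apply Finset.card_bij (fun p _ => (sTr n i p.1, sTr n i p.2))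
    · rintro ⟨p, q⟩ hp
      rw [Finset.mem_erase, mem_invSet] at hp ⊢
      obtain ⟨hne, h1, h2⟩ := hp
      have hne' : ¬(p.1 = i.1 ∧ q.1 = i.1 + 1) := by
        rintro ⟨e1, e2⟩
        exact hne (by rw [Prod.ext_iff]; exact ⟨Fin.ext e1, Fin.ext e2⟩)
      have hlt : sTr n i p < sTr n i q := sTr_pair_lt h1 hne'
      refine ⟨?_, hlt, by simpa [Equiv.Perm.mul_apply] using h2⟩
      rintro he
      rw [Prod.ext_iff] at he
      obtain ⟨e1, e2⟩ := he
      simp only at e1 e2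
      -- sTr p = a and sTr q = b means p = b, q = a, contradicting p < q
      have : p = sTr n i a := by rw [← e1]; simp [← Equiv.Perm.mul_apply, sTr_mul_self]
      have hq : q = sTr n i b := by rw [← e2]; simp [← Equiv.Perm.mul_apply, sTr_mul_self]
      rw [hsa] at this; rw [hsb] at hq
      subst this; subst hq
      exact absurd h1 (not_lt.2 hab.le)
    · rintro ⟨p, q⟩ hp ⟨p', q'⟩ hp' he
      rw [Prod.ext_iff] at he
      obtain ⟨e1, e2⟩ := he
      simp only at e1 e2
      have e1' := congrArg (sTr n i) e1
      have e2' := congrArg (sTr n i) e2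
      simp only [← Equiv.Perm.mul_apply, sTr_mul_self, Equiv.Perm.one_apply] at e1' e2'
      rw [Prod.ext_iff]; exact ⟨e1', e2'⟩
    · rintro ⟨p, q⟩ hp
      rw [Finset.mem_erase, mem_invSet] at hp
      obtain ⟨hne, h1, h2⟩ := hp
      refine ⟨(sTr n i p, sTr n i q), ?_, ?_⟩
      · rw [Finset.mem_erase, mem_invSet]
        have hne' : ¬(p.1 = i.1 ∧ q.1 = i.1 + 1) := by
          rintro ⟨e1, e2⟩
          -- then (p,q) = (a,b)
          exact hne (by rw [Prod.ext_iff]; exact ⟨Fin.ext e1, Fin.ext e2⟩)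
        have hlt : sTr n i p < sTr n i q := sTr_pair_lt h1 hne'
        refine ⟨?_, hlt, ?_⟩
        · rintro he
          rw [Prod.ext_iff] at he
          obtain ⟨e1, e2⟩ := he
          simp only at e1 e2
          have hp' : p = sTr n i a := by rw [← e1]; simp [← Equiv.Perm.mul_apply, sTr_mul_self]
          have hq' : q = sTr n i b := by rw [← e2]; simp [← Equiv.Perm.mul_apply, sTr_mul_self]
          rw [hsa] at hp'; rw [hsb] at hq'
          subst hp'; subst hq'
          exact absurd h1 (not_lt.2 hab.le)
        · simp only [Equiv.Perm.mul_apply, ← Equiv.Perm.mul_apply (sTr n i), sTr_mul_self]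
          simpa using h2
      · simp [← Equiv.Perm.mul_apply, sTr_mul_self]
  have c1 : (invSet n (w * sTr n i)).card = ((invSet n (w * sTr n i)).erase (a, b)).card + 1 :=
    (Finset.card_erase_add_one hmem).symm
  have c2 : ((invSet n w).erase (a, b)) = invSet n w := Finset.erase_eq_of_notMem hnmem
  rw [inv, inv, c1, key, c2]

lemma inv_mul_sTr_of_gt {w : Equiv.Perm (Fin n)} {i : Fin (n-1)}
    (h : w (eB n i) < w (eA n i)) : inv n (w * sTr n i) + 1 = inv n w := by
  have h' : (w * sTr n i) (eA n i) < (w * sTr n i) (eB n i) := by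
    have hsa : sTr n i (eA n i) = eB n i := by rw [sTr_eq]; exact Equiv.swap_apply_left _ _
    have hsb : sTr n i (eB n i) = eA n i := by rw [sTr_eq]; exact Equiv.swap_apply_right _ _
    simpa [Equiv.Perm.mul_apply, hsa, hsb] using h
  have := inv_mul_sTr_of_lt h'
  rw [mul_assoc, sTr_mul_self, mul_one] at this
  omega

lemma apply_ne {w : Equiv.Perm (Fin n)} (i : Fin (n-1)) : w (eA n i) ≠ w (eB n i) :=
  fun he => absurd (w.injective he) (ne_of_lt (eA_lt_eB i))

/-- any word's product has at most `length` inversions -/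
lemma inv_wp_le (l : List (Fin (n-1))) : inv n (wp n l) ≤ l.length := by
  induction l using List.reverseRecOn with
  | nil => simp [wp_nil, inv_one]
  | append_singleton l i ih =>
    rw [wp_concat]
    rcases lt_or_gt_of_ne (apply_ne (w := wp n l) i) with h | h
    · rw [inv_mul_sTr_of_lt h]; simpa using Nat.add_le_add_right ih 1
    · have := inv_mul_sTr_of_gt h
      simp only [List.length_append, List.length_singleton]
      omega

/-- a permutation with no descent is the identity -/
lemma eq_one_of_no_descent {w : Equiv.Perm (Fin n)}
    (h : ∀ i : Fin (n-1), w (eA n i) < w (eB n i)) : w = 1 := by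
  have hsm : StrictMono w := by
    intro p q hpq
    rw [Fin.lt_def] at hpq
    -- induct on the gap
    have : ∀ d : ℕ, ∀ p q : Fin n, q.1 = p.1 + d + 1 → w p < w q := by
      intro d
      induction d with
      | zero =>
        intro p q hq
        have hp1 : p.1 < n - 1 := by have := q.isLt; omega
        have hpA : p = eA n ⟨p.1, hp1⟩ := rfl
        have hqB : q = eB n ⟨p.1, hp1⟩ := by rw [Fin.ext_iff]; simp [eB]; omega
        rw [hpA, hqB]; exact h _
      | succ d ih =>
        intro p q hq
        have hm1 : p.1 + d + 1 < n := by have := q.isLt; omega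
        have := ih p ⟨p.1 + d + 1, hm1⟩ (by simp)
        refine this.trans ?_
        have hp1 : p.1 + d + 1 < n - 1 := by have := q.isLt; omega
        have h2 := h ⟨p.1 + d + 1, hp1⟩
        have e1 : eA n ⟨p.1 + d + 1, hp1⟩ = ⟨p.1 + d + 1, hm1⟩ := rfl
        have e2 : eB n ⟨p.1 + d + 1, hp1⟩ = q := by rw [Fin.ext_iff]; simp [eB]; omega
        rwa [e1, e2] at h2
    obtain ⟨d, hd⟩ : ∃ d : ℕ, q.1 = p.1 + d + 1 := ⟨q.1 - p.1 - 1, by omega⟩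
    exact this d p q hd
  have hsm' : StrictMono (⇑(w⁻¹) : Fin n → Fin n) := by
    intro a b hab
    rcases lt_trichotomy (w⁻¹ a) (w⁻¹ b) with hh | hh | hh
    · exact hh
    · exact absurd (by simpa using congrArg w hh) hab.ne
    · have := hsm hh
      simp only [← Equiv.Perm.mul_apply, mul_inv_cancel, Equiv.Perm.one_apply] at this
      exact absurd hab (not_lt.2 this.le)
  have inst : WellFoundedLT (Fin n) := inferInstance
  ext x
  have h1 : x ≤ w x := @StrictMono.le_apply (Fin n) _ inst _ hsm x
  have h2 : w x ≤ x := by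
    simpa using @StrictMono.le_apply (Fin n) _ inst _ hsm' (w x)
  simp [le_antisymm h2 h1]

/-- existence of a descent when not the identity -/
lemma exists_descent {w : Equiv.Perm (Fin n)} (h : w ≠ 1) :
    ∃ i : Fin (n-1), w (eB n i) < w (eA n i) := by
  by_contra hc
  push_neg at hc
  refine h (eq_one_of_no_descent fun i => ?_)
  exact lt_of_le_of_ne (hc i) (apply_ne (w := w) i)

/-- every permutation is the product of `inv` many simple transpositions -/
lemma exists_word (w : Equiv.Perm (Fin n)) :
    ∃ l : List (Fin (n-1)), wp n l = w ∧ l.length = inv n w := by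
  generalize hk : inv n w = k
  induction k generalizing w with
  | zero =>
    have hw : w = 1 := by
      by_contra h
      obtain ⟨i, hi⟩ := exists_descent h
      have := inv_mul_sTr_of_gt hi
      omega
    exact ⟨[], by simp [wp_nil, hw], rfl⟩
  | succ k ih =>
    have hw : w ≠ 1 := by rintro rfl; rw [inv_one] at hk; omega
    obtain ⟨i, hi⟩ := exists_descent hw
    have hk' : inv n (w * sTr n i) = k := by have := inv_mul_sTr_of_gt hi; omega
    obtain ⟨l, hl, hlen⟩ := ih (w * sTr n i) hk'
    refine ⟨l ++ [i], ?_, by simp [hlen, hk']⟩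
    rw [wp_concat, hl, mul_assoc, sTr_mul_self, mul_one]

lemma len_eq_inv (w : Equiv.Perm (Fin n)) : len n w = inv n w := by
  obtain ⟨l, hl, hlen⟩ := exists_word w
  apply le_antisymm
  · exact Nat.sInf_le ⟨l, hlen, hl⟩
  · have hne : {k | ∃ l : List (Fin (n-1)), l.length = k ∧ (l.map (sTr n)).prod = w}.Nonempty :=
      ⟨l.length, l, rfl, hl⟩
    obtain ⟨l', hlen', hl'⟩ := Nat.sInf_mem hne
    rw [len, ← hlen']
    exact hl' ▸ inv_wp_le l'

lemma len_le_length {l : List (Fin (n-1))} {w : Equiv.Perm (Fin n)} (h : wp n l = w) :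
    len n w ≤ l.length :=
  Nat.sInf_le ⟨l, rfl, h⟩

lemma exists_red (w : Equiv.Perm (Fin n)) :
    ∃ l : List (Fin (n-1)), wp n l = w ∧ l.length = len n w := by
  obtain ⟨l, hl, hlen⟩ := exists_word w
  exact ⟨l, hl, by rw [len_eq_inv, hlen]⟩

lemma len_one : len n (1 : Equiv.Perm (Fin n)) = 0 := by rw [len_eq_inv, inv_one]

lemma len_mul_le (a b : Equiv.Perm (Fin n)) : len n (a * b) ≤ len n a + len n b := by
  obtain ⟨la, ha, hla⟩ := exists_red a
  obtain ⟨lb, hb, hlb⟩ := exists_red b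
  have : wp n (la ++ lb) = a * b := by rw [wp_append, ha, hb]
  calc len n (a * b) ≤ (la ++ lb).length := len_le_length this
    _ = len n a + len n b := by simp [hla, hlb]

lemma len_mul_sTr_of_lt {w : Equiv.Perm (Fin n)} {i : Fin (n-1)}
    (h : w (eA n i) < w (eB n i)) : len n (w * sTr n i) = len n w + 1 := by
  rw [len_eq_inv, len_eq_inv]; exact inv_mul_sTr_of_lt h

lemma len_mul_sTr_of_gt {w : Equiv.Perm (Fin n)} {i : Fin (n-1)}
    (h : w (eB n i) < w (eA n i)) : len n (w * sTr n i) + 1 = len n w := by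
  rw [len_eq_inv, len_eq_inv]; exact inv_mul_sTr_of_gt h

/-- if the length drops, there is a descent -/
lemma descent_of_len_lt {w : Equiv.Perm (Fin n)} {i : Fin (n-1)}
    (h : len n (w * sTr n i) < len n w) : w (eB n i) < w (eA n i) := by
  rcases lt_or_gt_of_ne (apply_ne (w := w) i) with h' | h'
  · rw [len_mul_sTr_of_lt h'] at h; omega
  · exact h'

lemma len_eq_zero_iff {w : Equiv.Perm (Fin n)} : len n w = 0 ↔ w = 1 := by
  constructor
  · intro h
    rw [len_eq_inv] at h
    by_contra hw
    obtain ⟨i, hi⟩ := exists_descent hw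
    have := inv_mul_sTr_of_gt hi
    omega
  · rintro rfl; exact len_one

end BilleyAux

namespace BilleyAux

variable {n : ℕ}

lemma sTr_inv (i : Fin (n-1)) : (sTr n i)⁻¹ = sTr n i :=
  inv_eq_of_mul_eq_one_right (sTr_mul_self i)

lemma wp_reverse (l : List (Fin (n-1))) : wp n l.reverse = (wp n l)⁻¹ := by
  induction l with
  | nil => simp [wp_nil]
  | cons i l ih =>
    rw [List.reverse_cons, wp_concat, ih, wp_cons, mul_inv_rev, sTr_inv]

lemma len_inv_le (w : Equiv.Perm (Fin n)) : len n w⁻¹ ≤ len n w := by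
  obtain ⟨l, hl, hlen⟩ := exists_red w
  have : wp n l.reverse = w⁻¹ := by rw [wp_reverse, hl]
  calc len n w⁻¹ ≤ l.reverse.length := len_le_length this
    _ = len n w := by simpa using hlen

lemma len_inv (w : Equiv.Perm (Fin n)) : len n w⁻¹ = len n w := by
  refine le_antisymm (len_inv_le w) ?_
  simpa using len_inv_le w⁻¹

lemma len_sTr_le (i : Fin (n-1)) : len n (sTr n i) ≤ 1 :=
  len_le_length (l := [i]) (by simp [wp])

private lemma exists_flip {g : ℕ → Prop} : ∀ m : ℕ, g m → ¬ g 0 → ∃ j < m, ¬ g j ∧ g (j+1) := by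
  intro m
  induction m with
  | zero => intro hm h0; exact absurd hm h0
  | succ m ih =>
    intro hm h0
    by_cases hgm : g m
    · obtain ⟨j, hj, h⟩ := ih hgm h0
      exact ⟨j, hj.trans (Nat.lt_succ_self m), h⟩
    · exact ⟨m, Nat.lt_succ_self m, hgm, hm⟩

/-- the (simple-reflection) exchange property -/
lemma exchange {b : List (Fin (n-1))} {i : Fin (n-1)}
    (h : (wp n b) (eB n i) < (wp n b) (eA n i)) :
    ∃ j < b.length, wp n b * sTr n i = wp n (b.eraseIdx j) := by
  set p := eA n i with hp
  set q := eB n i with hq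
  set x : ℕ → Equiv.Perm (Fin n) := fun j => wp n (b.drop j) with hx
  have hxtop : x b.length = 1 := by simp [hx, wp_nil]
  have hg_top : x b.length p < x b.length q := by rw [hxtop]; exact eA_lt_eB i
  have hg_0 : ¬ (x 0 p < x 0 q) := by
    simp only [hx, List.drop_zero]
    exact not_lt.2 h.le
  obtain ⟨j, hj, hgj, hgj1⟩ := exists_flip (g := fun j => x j p < x j q) b.length hg_top hg_0
  refine ⟨j, hj, ?_⟩
  set c := b.get ⟨j, hj⟩ with hc
  set y := x (j+1) with hy
  have hdrop : b.drop j = c :: b.drop (j+1) := by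
    rw [hc]
    exact List.drop_eq_getElem_cons hj
  have hxj : x j = sTr n c * y := by
    show wp n (b.drop j) = sTr n c * y
    rw [hdrop, wp_cons]
  have hyp : y p = eA n c ∧ y q = eB n c := by
    by_contra hcon
    apply hgj
    rw [hxj]
    simp only [Equiv.Perm.mul_apply]
    apply sTr_pair_lt hgj1
    rintro ⟨e1, e2⟩
    exact hcon ⟨Fin.ext e1, Fin.ext e2⟩
  have hswap : y * sTr n i * y⁻¹ = sTr n c := by
    rw [sTr_eq i, ← Equiv.swap_apply_apply, hyp.1, hyp.2, sTr_eq]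
  have hkey : sTr n c * y = y * sTr n i := by
    rw [← hswap]; group
  have hb : wp n b = wp n (b.take j) * (sTr n c * y) := by
    rw [← hxj]
    show wp n b = wp n (b.take j) * wp n (b.drop j)
    conv_lhs => rw [← List.take_append_drop j b]
    rw [wp_append]
  rw [hb, hkey]
  have : wp n (b.eraseIdx j) = wp n (b.take j) * y := by
    rw [List.eraseIdx_eq_take_drop_succ, wp_append]
  rw [this]
  rw [mul_assoc, mul_assoc, sTr_mul_self, mul_one]

/-- key lemma: if lengths add, the left factor appears as a sublist of any
reduced word of the product -/
lemma subword_left : ∀ (k : ℕ) (v w : Equiv.Perm (Fin n)) (b : List (Fin (n-1))),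
    len n w = k → len n (v * w) = len n v + len n w → wp n b = v * w →
    b.length = len n (v * w) →
    ∃ l : List (Fin (n-1)), l.Sublist b ∧ l.length = len n v ∧ wp n l = v := by
  intro k
  induction k with
  | zero =>
    intro v w b hw hadd hb hlen
    have hw1 : w = 1 := len_eq_zero_iff.1 hw
    subst hw1
    refine ⟨b, List.Sublist.refl b, ?_, by rw [hb, mul_one]⟩
    rw [hlen, hadd, hw, Nat.add_zero]
  | succ k ih =>
    intro v w b hw hadd hb hlen
    have hwne : w ≠ 1 := by
      intro h; rw [h, len_one] at hw; omega
    obtain ⟨i, hi⟩ := exists_descent hwne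
    set w' := w * sTr n i with hw'
    have hlw' : len n w' + 1 = len n w := len_mul_sTr_of_gt hi
    have hvw'_le : len n (v * w') ≤ len n v + len n w' := len_mul_le v w'
    have hvw_eq : v * w * sTr n i = v * w' := by rw [hw', mul_assoc]
    have hdesc : (v * w) (eB n i) < (v * w) (eA n i) := by
      rcases lt_or_gt_of_ne (apply_ne (w := v * w) i) with h' | h'
      · exfalso
        have := len_mul_sTr_of_lt h'
        rw [hvw_eq] at this
        omega
      · exact h'
    obtain ⟨j, hj, hex⟩ := exchange (b := b) (i := i) (by rw [hb]; exact hdesc)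
    rw [hb, hvw_eq] at hex
    have hvw'_ge : len n v + len n w' ≤ len n (v * w') := by
      have h1 : len n (v * w) ≤ len n (v * w') + 1 := by
        have : v * w = (v * w') * sTr n i := by
          rw [← hvw_eq, mul_assoc, mul_assoc, sTr_mul_self, mul_one]
        calc len n (v * w) = len n ((v * w') * sTr n i) := by rw [← this]
          _ ≤ len n (v * w') + len n (sTr n i) := len_mul_le _ _
          _ ≤ len n (v * w') + 1 := by have := len_sTr_le (n := n) i; omega
      omega
    have hvw' : len n (v * w') = len n v + len n w' := le_antisymm hvw'_le hvw'_ge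
    have herlen : (b.eraseIdx j).length = len n (v * w') := by
      rw [List.length_eraseIdx_of_lt hj, hlen, hadd, hvw']
      omega
    obtain ⟨l, hsub, hllen, hlwp⟩ := ih v w' (b.eraseIdx j) (by omega) hvw' hex.symm herlen
    exact ⟨l, hsub.trans (List.eraseIdx_sublist b j), hllen, hlwp⟩

lemma subword_right {v w : Equiv.Perm (Fin n)} {b : List (Fin (n-1))}
    (hadd : len n (v * w) = len n v + len n w) (hb : wp n b = v * w)
    (hlen : b.length = len n (v * w)) :
    ∃ l : List (Fin (n-1)), l.Sublist b ∧ l.length = len n w ∧ wp n l = w := by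
  have h1 : wp n b.reverse = w⁻¹ * v⁻¹ := by rw [wp_reverse, hb]; group
  have h2 : len n (w⁻¹ * v⁻¹) = len n w⁻¹ + len n v⁻¹ := by
    have : w⁻¹ * v⁻¹ = (v * w)⁻¹ := by group
    rw [this, len_inv, len_inv, len_inv, hadd]
    omega
  have h3 : b.reverse.length = len n (w⁻¹ * v⁻¹) := by
    have : w⁻¹ * v⁻¹ = (v * w)⁻¹ := by group
    rw [this, len_inv]
    simpa using hlen
  obtain ⟨l, hsub, hllen, hlwp⟩ := subword_left (len n v⁻¹) w⁻¹ v⁻¹ b.reverse rfl h2 h1 h3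
  refine ⟨l.reverse, ?_, by simpa [len_inv] using hllen, ?_⟩
  · have := hsub.reverse
    rwa [List.reverse_reverse] at this
  · rw [wp_reverse, hlwp]
    simp

/-- prefixes of reduced words are reduced -/
lemma len_wp_take {b : List (Fin (n-1))} (hb : b.length = len n (wp n b))
    {j : ℕ} (hj : j ≤ b.length) : len n (wp n (b.take j)) = j := by
  have hle : len n (wp n (b.take j)) ≤ j := by
    have := len_le_length (l := b.take j) (w := wp n (b.take j)) rfl
    rwa [List.length_take, min_eq_left hj] at this
  have hge : j ≤ len n (wp n (b.take j)) := by
    have hsplit : wp n b = wp n (b.take j) * wp n (b.drop j) := by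
      conv_lhs => rw [← List.take_append_drop j b]
      rw [wp_append]
    have h1 : len n (wp n b) ≤ len n (wp n (b.take j)) + len n (wp n (b.drop j)) := by
      rw [hsplit]; exact len_mul_le _ _
    have h2 : len n (wp n (b.drop j)) ≤ b.length - j := by
      have := len_le_length (l := b.drop j) (w := wp n (b.drop j)) rfl
      rwa [List.length_drop] at this
    omega
  omega

/-- along a reduced word, each prefix acts increasingly on the next letter's root -/
lemma prefix_incr {b : List (Fin (n-1))} (hb : b.length = len n (wp n b))
    (j : Fin b.length) :
    (wp n (b.take j.1)) (eA n (b.get j)) < (wp n (b.take j.1)) (eB n (b.get j)) := by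
  have h1 : len n (wp n (b.take j.1)) = j.1 := len_wp_take hb j.isLt.le
  have h2 : len n (wp n (b.take (j.1 + 1))) = j.1 + 1 := len_wp_take hb j.isLt
  have htake : b.take (j.1 + 1) = b.take j.1 ++ [b.get j] := by
    rw [← List.take_concat_get j.isLt, List.concat_eq_append]
    rfl
  have h3 : wp n (b.take (j.1+1)) = wp n (b.take j.1) * sTr n (b.get j) := by
    rw [htake, wp_concat]
  rcases lt_or_gt_of_ne (apply_ne (w := wp n (b.take j.1)) (b.get j)) with h' | h'
  · exact h'
  · exfalso
    have := len_mul_sTr_of_gt h'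
    rw [← h3, h2, h1] at this
    omega

end BilleyAux

namespace BilleyAux

variable {n : ℕ} {P : Set (Fin (n-1))}

/-- the block equivalence determined by `P` -/
def Rel (n : ℕ) (P : Set (Fin (n-1))) (i j : Fin n) : Prop :=
  ∀ (k : ℕ) (hk : k < n - 1), min i.1 j.1 ≤ k → k < max i.1 j.1 → (⟨k, hk⟩ : Fin (n-1)) ∈ P

lemma rel_refl (i : Fin n) : Rel n P i i := by
  intro k hk h1 h2; omega

lemma rel_symm {i j : Fin n} (h : Rel n P i j) : Rel n P j i := by
  intro k hk h1 h2
  exact h k hk (by omega) (by omega)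

lemma rel_trans {i j l : Fin n} (h1 : Rel n P i j) (h2 : Rel n P j l) : Rel n P i l := by
  intro k hk hk1 hk2
  by_cases hc : min i.1 j.1 ≤ k ∧ k < max i.1 j.1
  · exact h1 k hk hc.1 hc.2
  · push_neg at hc
    exact h2 k hk (by omega) (by omega)

lemma rel_sTr {p : Fin (n-1)} (hp : p ∈ P) (x : Fin n) : Rel n P (sTr n p x) x := by
  intro k hk h1 h2
  have hv := sTr_apply_val p x
  by_cases c1 : x.1 = p.1
  · have hkp : k = p.1 := by rw [c1] at hv; simp at hv; omega
    have : (⟨k, hk⟩ : Fin (n-1)) = p := Fin.ext hkp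
    rwa [this]
  · by_cases c2 : x.1 = p.1 + 1
    · have hkp : k = p.1 := by rw [if_neg (by omega), if_pos c2] at hv; omega
      have : (⟨k, hk⟩ : Fin (n-1)) = p := Fin.ext hkp
      rwa [this]
    · rw [if_neg c1, if_neg c2] at hv
      omega

lemma rel_of_WPar {w : Equiv.Perm (Fin n)} (hw : w ∈ WPar n P) (x : Fin n) :
    Rel n P (w x) x := by
  induction hw using Subgroup.closure_induction generalizing x with
  | mem g hg =>
    obtain ⟨p, hp, rfl⟩ := hg
    exact rel_sTr hp x
  | one => exact rel_refl x
  | mul g1 g2 hg1 hg2 ih1 ih2 =>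
    have h1 : Rel n P (g1 (g2 x)) (g2 x) := ih1 (g2 x)
    exact rel_trans h1 (ih2 x)
  | inv g hg ih =>
    have := ih (g⁻¹ x)
    simp only [← Equiv.Perm.mul_apply, mul_inv_cancel, Equiv.Perm.one_apply] at this
    exact rel_symm this

lemma rel_cross {i j a b : Fin n} (hij : i < j) (hnr : ¬ Rel n P i j)
    (hai : Rel n P a i) (hbj : Rel n P b j) : a < b := by
  rw [Fin.lt_def] at hij ⊢
  unfold Rel at hnr
  push_neg at hnr
  obtain ⟨k, hk, h1, h2, hkP⟩ := hnr
  have hak : a.1 ≤ k := by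
    by_contra hc
    push_neg at hc
    exact hkP (hai k hk (by omega) (by omega))
  have hkb : k < b.1 := by
    by_contra hc
    push_neg at hc
    exact hkP (hbj k hk (by omega) (by omega))
  omega

lemma minReps_incr {v : Equiv.Perm (Fin n)} (hv : v ∈ minReps n P)
    {p : Fin (n-1)} (hp : p ∈ P) : v (eA n p) < v (eB n p) := by
  have hmem : sTr n p ∈ WPar n P := Subgroup.subset_closure ⟨p, hp, rfl⟩
  have hle := hv (sTr n p) hmem
  rcases lt_or_gt_of_ne (apply_ne (w := v) p) with h | h
  · exact h
  · exfalso
    have := len_mul_sTr_of_gt h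
    omega

lemma rel_incr {v : Equiv.Perm (Fin n)}
    (hv : ∀ p ∈ P, v (eA n p) < v (eB n p)) :
    ∀ i j : Fin n, i < j → Rel n P i j → v i < v j := by
  have key : ∀ d : ℕ, ∀ i j : Fin n, j.1 = i.1 + d + 1 → Rel n P i j → v i < v j := by
    intro d
    induction d with
    | zero =>
      intro i j hj hr
      have hi1 : i.1 < n - 1 := by have := j.isLt; omega
      have hP : (⟨i.1, hi1⟩ : Fin (n-1)) ∈ P :=
        hr i.1 hi1 (by omega) (by omega)
      have h := hv _ hP
      have e1 : eA n ⟨i.1, hi1⟩ = i := rfl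
      have e2 : eB n ⟨i.1, hi1⟩ = j := Fin.ext (by simpa [eB] using hj.symm)
      rwa [e1, e2] at h
    | succ d ih =>
      intro i j hj hr
      have hm : i.1 + d + 1 < n := by have := j.isLt; omega
      set m : Fin n := ⟨i.1 + d + 1, hm⟩ with hmm
      have hmval : m.1 = i.1 + d + 1 := rfl
      have h1 : Rel n P i m := by
        intro k hk hk1 hk2
        exact hr k hk (by omega) (by omega)
      have h2 : Rel n P m j := by
        intro k hk hk1 hk2
        exact hr k hk (by omega) (by omega)
      have hstep : v i < v m := ih i m (by omega) h1
      have hm1 : m.1 < n - 1 := by have := j.isLt; omega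
      have hP : (⟨m.1, hm1⟩ : Fin (n-1)) ∈ P := h2 m.1 hm1 (by omega) (by omega)
      have h := hv _ hP
      have e1 : eA n ⟨m.1, hm1⟩ = m := rfl
      have e2 : eB n ⟨m.1, hm1⟩ = j := Fin.ext (by simp [eB]; omega)
      rw [e1, e2] at h
      exact hstep.trans h
  intro i j hij hr
  rw [Fin.lt_def] at hij
  exact key (j.1 - i.1 - 1) i j (by omega) hr

/-- additivity of inversions for a minimal representative times a parabolic element -/
lemma inv_mul_parabolic {v w : Equiv.Perm (Fin n)}
    (hvi : ∀ i j : Fin n, i < j → Rel n P i j → v i < v j)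
    (hw : ∀ x : Fin n, Rel n P (w x) x) :
    inv n (v * w) = inv n v + inv n w := by
  classical
  have hrelS : ∀ x y : Fin n, Rel n P x y → Rel n P (w x) (w y) := by
    intro x y hxy
    exact rel_trans (hw x) (rel_trans hxy (rel_symm (hw y)))
  have hwinv : ∀ x : Fin n, Rel n P (w⁻¹ x) x := by
    intro x
    have := hw (w⁻¹ x)
    simp only [← Equiv.Perm.mul_apply, mul_inv_cancel, Equiv.Perm.one_apply] at this
    exact rel_symm this
  have hsplit := Finset.card_filter_add_card_filter_not
    (s := invSet n (v * w)) (p := fun p => Rel n P p.1 p.2)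
  have claim1 : (invSet n (v * w)).filter (fun p => Rel n P p.1 p.2) = invSet n w := by
    ext ⟨i, j⟩
    simp only [Finset.mem_filter, mem_invSet, Equiv.Perm.mul_apply]
    constructor
    · rintro ⟨⟨h1, h2⟩, hr⟩
      refine ⟨h1, ?_⟩
      rcases lt_trichotomy (w i) (w j) with hc | hc | hc
      · exfalso
        have : Rel n P (w i) (w j) := rel_trans (hw i) (rel_trans hr (rel_symm (hw j)))
        exact absurd (hvi _ _ hc this) (not_lt.2 h2.le)
      · exact absurd (w.injective hc) (ne_of_lt h1)
      · exact hc
    · rintro ⟨h1, h2⟩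
      have hr : Rel n P i j := by
        by_contra hnr
        have := rel_cross h1 hnr (hw i) (hw j)
        exact absurd h2 (not_lt.2 this.le)
      refine ⟨⟨h1, ?_⟩, hr⟩
      exact hvi _ _ h2 (rel_trans (hw j) (rel_trans (rel_symm hr) (rel_symm (hw i))))
  have claim2 : ((invSet n (v * w)).filter (fun p => ¬ Rel n P p.1 p.2)).card = inv n v := by
    apply Finset.card_bij (fun p _ => (w p.1, w p.2))
    · rintro ⟨i, j⟩ hp
      rw [Finset.mem_filter, mem_invSet] at hp
      obtain ⟨⟨h1, h2⟩, hnr⟩ := hp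
      rw [mem_invSet]
      simp only [Equiv.Perm.mul_apply] at h2
      exact ⟨rel_cross h1 hnr (hw i) (hw j), h2⟩
    · rintro ⟨i, j⟩ - ⟨i', j'⟩ - he
      rw [Prod.ext_iff] at he ⊢
      obtain ⟨e1, e2⟩ := he
      exact ⟨w.injective e1, w.injective e2⟩
    · rintro ⟨a, b⟩ hab
      rw [mem_invSet] at hab
      obtain ⟨h1, h2⟩ := hab
      have hnr : ¬ Rel n P a b := by
        intro hr
        exact absurd (hvi _ _ h1 hr) (not_lt.2 h2.le)
      refine ⟨(w⁻¹ a, w⁻¹ b), ?_, by simp⟩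
      rw [Finset.mem_filter, mem_invSet]
      have hlt : w⁻¹ a < w⁻¹ b := rel_cross h1 hnr (hwinv a) (hwinv b)
      refine ⟨⟨hlt, by simpa using h2⟩, ?_⟩
      intro hr
      exact hnr (rel_trans (rel_symm (hwinv a)) (rel_trans hr (hwinv b)))
  rw [inv, ← hsplit, claim1, claim2]
  have h1 : inv n w = (invSet n w).card := rfl
  omega
  
/-- length additivity for minimal coset representatives -/
lemma len_mul_parabolic {v w : Equiv.Perm (Fin n)}
    (hv : v ∈ minReps n P) (hw : w ∈ WPar n P) :
    len n (v * w) = len n v + len n w := by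
  rw [len_eq_inv, len_eq_inv, len_eq_inv]
  exact inv_mul_parabolic (rel_incr (fun p hp => minReps_incr hv hp)) (rel_of_WPar hw)

end BilleyAux

namespace BilleyAux

variable {n : ℕ}

lemma alphaR_eq (i : Fin (n-1)) : alphaR n i = X (eA n i) - X (eB n i) := rfl

lemma rPoly_eq {b : List (Fin (n-1))} (j : Fin b.length) :
    rPoly n b j = X ((wp n (b.take j.1)) (eA n (b.get j)))
      - X ((wp n (b.take j.1)) (eB n (b.get j))) := by
  rw [rPoly, alphaR_eq, map_sub, rename_X, rename_X]
  rfl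

lemma rPoly_hom {b : List (Fin (n-1))} (j : Fin b.length) :
    (rPoly n b j).IsHomogeneous 1 := by
  rw [rPoly_eq]
  exact (isHomogeneous_X _ _).sub (isHomogeneous_X _ _)

lemma billeyWord_hom (b : List (Fin (n-1))) (v : Equiv.Perm (Fin n)) :
    (billeyWord n b v).IsHomogeneous (len n v) := by
  apply MvPolynomial.IsHomogeneous.sum
  intro J hJ
  rw [Finset.mem_filter] at hJ
  have := MvPolynomial.IsHomogeneous.prod J (fun j => rPoly n b j) (fun _ => 1)
    (fun j _ => rPoly_hom j)
  simpa [hJ.2.1] using this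

/-- the evaluation point `xₖ = n - k` -/
def evPt (n : ℕ) : Fin n → ℂ := fun k => ((n - k.1 : ℕ) : ℂ)

lemma eval_rPoly {b : List (Fin (n-1))} (hb : b.length = len n (wp n b)) (j : Fin b.length) :
    eval (evPt n) (rPoly n b j)
      = ((((wp n (b.take j.1)) (eB n (b.get j))).1
          - (((wp n (b.take j.1)) (eA n (b.get j))).1) : ℕ) : ℂ) := by
  rw [rPoly_eq, map_sub, eval_X, eval_X]
  simp only [evPt]
  set p := ((wp n (b.take j.1)) (eA n (b.get j))).1 with hp
  set q := ((wp n (b.take j.1)) (eB n (b.get j))).1 with hq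
  have hqn : q < n := Fin.isLt _
  have hpq : p < q := prefix_incr hb j
  have e : n - p = (q - p) + (n - q) := by omega
  rw [e]
  push_cast [Nat.sub_add_cancel]
  ring

lemma eval_rPoly_pos {b : List (Fin (n-1))} (hb : b.length = len n (wp n b)) (j : Fin b.length) :
    0 < (((wp n (b.take j.1)) (eB n (b.get j))).1
          - (((wp n (b.take j.1)) (eA n (b.get j))).1) : ℕ) := by
  have hpq := prefix_incr hb j
  rw [Fin.lt_def] at hpq
  omega

/-- nonvanishing of Billey's expression for reduced words -/
lemma billeyWord_ne_zero {b : List (Fin (n-1))} (hb : b.length = len n (wp n b))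
    {v : Equiv.Perm (Fin n)}
    (hne : (Finset.univ.filter (fun J : Finset (Fin b.length) =>
      J.card = len n v ∧
        ((J.sort (· ≤ ·)).map (fun j => sTr n (b.get j))).prod = v)).Nonempty) :
    billeyWord n b v ≠ 0 := by
  intro h0
  have := congrArg (eval (evPt n)) h0
  rw [billeyWord, map_sum] at this
  simp only [map_prod] at this
  set N : Fin b.length → ℕ := fun j => (((wp n (b.take j.1)) (eB n (b.get j))).1
          - (((wp n (b.take j.1)) (eA n (b.get j))).1) : ℕ) with hN
  have hev : ∀ J : Finset (Fin b.length),
      (∏ j ∈ J, eval (evPt n) (rPoly n b j)) = ((∏ j ∈ J, N j : ℕ) : ℂ) := by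
    intro J
    rw [Nat.cast_prod]
    exact Finset.prod_congr rfl (fun j _ => eval_rPoly hb j)
  rw [Finset.sum_congr rfl (fun J _ => hev J), ← Nat.cast_sum] at this
  simp only [map_zero] at this
  rw [Nat.cast_eq_zero] at this
  have hpos : 0 < ∑ J ∈ Finset.univ.filter (fun J : Finset (Fin b.length) =>
      J.card = len n v ∧
        ((J.sort (· ≤ ·)).map (fun j => sTr n (b.get j))).prod = v), ∏ j ∈ J, N j := by
    apply Finset.sum_pos
    · intro J _
      exact Finset.prod_pos (fun j _ => eval_rPoly_pos hb j)
    · exact hne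
  omega

lemma eq_of_perm_of_sorted' {α : Type*} {r : α → α → Prop} [Std.Antisymm r]
    {l₁ l₂ : List α} (hp : l₁.Perm l₂) (h1 : l₁.Pairwise r) (h2 : l₂.Pairwise r) : l₁ = l₂ :=
  List.Perm.eq_of_pairwise' h1 h2 hp

lemma sort_univ (m : ℕ) : (Finset.univ : Finset (Fin m)).sort (· ≤ ·) = List.finRange m := by
  apply eq_of_perm_of_sorted' (r := (· ≤ · : Fin m → Fin m → Prop))
  · rw [List.perm_ext_iff_of_nodup (Finset.sort_nodup _ _) (List.nodup_finRange m)]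
    intro x
    simp [Finset.mem_sort, List.mem_finRange]
  · exact Finset.pairwise_sort _ _
  · exact (List.pairwise_lt_finRange m).imp (fun h => le_of_lt h)

/-- the whole word as a subset -/
lemma univ_mem_filter {b : List (Fin (n-1))} {u : Equiv.Perm (Fin n)}
    (hb : wp n b = u) (hlen : b.length = len n u) :
    (Finset.univ : Finset (Fin b.length)) ∈ Finset.univ.filter
      (fun J : Finset (Fin b.length) => J.card = len n u ∧
        ((J.sort (· ≤ ·)).map (fun j => sTr n (b.get j))).prod = u) := by
  rw [Finset.mem_filter]
  refine ⟨Finset.mem_univ _, ?_, ?_⟩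
  · rw [Finset.card_univ, Fintype.card_fin, hlen]
  · rw [sort_univ]
    have : (List.finRange b.length).map (fun j => sTr n (b.get j))
        = (b.map (sTr n)) := by
      conv_rhs => rw [← List.map_get_finRange b]
      rw [List.map_map]
      rfl
    rw [this]
    exact hb

/-- converting a sublist occurrence into a member of the Billey index set -/
lemma filter_nonempty_of_sublist {b l : List (Fin (n-1))} {v : Equiv.Perm (Fin n)}
    (hsub : l.Sublist b) (hlen : l.length = len n v) (hwp : wp n l = v) :
    (Finset.univ.filter (fun J : Finset (Fin b.length) =>
      J.card = len n v ∧
        ((J.sort (· ≤ ·)).map (fun j => sTr n (b.get j))).prod = v)).Nonempty := by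
  classical
  obtain ⟨f, hf⟩ := List.sublist_iff_exists_fin_orderEmbedding_get_eq.1 hsub
  refine ⟨Finset.univ.image f, ?_⟩
  rw [Finset.mem_filter]
  have hsort : (Finset.univ.image f).sort (· ≤ ·) = (List.finRange l.length).map f := by
    apply eq_of_perm_of_sorted' (r := (· ≤ · : Fin b.length → Fin b.length → Prop))
    · rw [List.perm_ext_iff_of_nodup (Finset.sort_nodup _ _)
        ((List.nodup_finRange _).map f.injective)]
      intro x
      simp [Finset.mem_sort]
    · exact Finset.pairwise_sort _ _
    · rw [List.pairwise_map]
      exact (List.pairwise_lt_finRange _).imp (fun h => (f.strictMono h).le)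
  refine ⟨Finset.mem_univ _, ?_, ?_⟩
  · rw [Finset.card_image_of_injective _ f.injective, Finset.card_univ, Fintype.card_fin, hlen]
  · rw [hsort, List.map_map]
    have : ((fun j => sTr n (b.get j)) ∘ f) = (fun ix => sTr n (l.get ix)) := by
      funext ix
      simp only [Function.comp_apply, ← hf ix]
    rw [this]
    have : (List.finRange l.length).map (fun ix => sTr n (l.get ix)) = l.map (sTr n) := by
      conv_rhs => rw [← List.map_get_finRange l]
      rw [List.map_map]
      rfl
    rw [this]
    exact hwp

lemma sigma_spec (z : Equiv.Perm (Fin n)) :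
    ∃ b : List (Fin (n-1)), IsRedWord n b z ∧ ∀ v, sigma n v z = billeyWord n b v := by
  have hex : ∃ b : List (Fin (n-1)), IsRedWord n b z := by
    obtain ⟨l, hl, hlen⟩ := exists_red z
    exact ⟨l, hl, hlen⟩
  exact ⟨hex.choose, hex.choose_spec, fun v => by rw [sigma, dif_pos hex]⟩

end BilleyAux

/-- Fix `P ⊆ {1, …, n-1}`. If `v ∈ W^P`, `w ∈ W_P`, `u ∈ W` and the
pointwise product `σ_v·σ_w` equals the single Schubert class `σ_u` as functions `W → R`,
then `u = vw`. -/
theorem product_eq_single_schubert (n : ℕ) (hn : 2 ≤ n) (P : Set (Fin (n - 1)))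
    (v : Equiv.Perm (Fin n)) (hv : v ∈ minReps n P)
    (w : Equiv.Perm (Fin n)) (hw : w ∈ WPar n P)
    (u : Equiv.Perm (Fin n))
    (h : ∀ z : Equiv.Perm (Fin n), sigma n v z * sigma n w z = sigma n u z) :
    u = v * w := by
  classical
  open BilleyAux in
  obtain ⟨bu, ⟨hbu_prod, hbu_len⟩, hbu_sig⟩ := sigma_spec (n := n) u
  have hbu_wp : wp n bu = u := hbu_prod
  have hbu_red : bu.length = len n (wp n bu) := by rw [hbu_wp, hbu_len]
  have huu : sigma n u u ≠ 0 := by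
    rw [hbu_sig u]
    exact billeyWord_ne_zero hbu_red ⟨_, univ_mem_filter hbu_wp hbu_len⟩
  have hu := h u
  have hvu : sigma n v u ≠ 0 := fun h0 => huu (by rw [← hu, h0, zero_mul])
  have hwu : sigma n w u ≠ 0 := fun h0 => huu (by rw [← hu, h0, mul_zero])
  have hhom_v : (sigma n v u).IsHomogeneous (len n v) := by
    rw [hbu_sig v]; exact billeyWord_hom bu v
  have hhom_w : (sigma n w u).IsHomogeneous (len n w) := by
    rw [hbu_sig w]; exact billeyWord_hom bu w
  have hhom_u : (sigma n u u).IsHomogeneous (len n u) := by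
    rw [hbu_sig u]; exact billeyWord_hom bu u
  have hlen_u : len n u = len n v + len n w := by
    have hprod_hom := hhom_v.mul hhom_w
    rw [hu] at hprod_hom
    exact hhom_u.inj_right hprod_hom huu
  have hadd : len n (v * w) = len n v + len n w := len_mul_parabolic hv hw
  obtain ⟨b, ⟨hb_prod, hb_len⟩, hb_sig⟩ := sigma_spec (n := n) (v * w)
  have hb_wp : wp n b = v * w := hb_prod
  have hb_red : b.length = len n (wp n b) := by rw [hb_wp, hb_len]
  obtain ⟨lv, hlv_sub, hlv_len, hlv_wp⟩ :=
    subword_left (len n w) v w b rfl hadd hb_wp hb_len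
  obtain ⟨lw, hlw_sub, hlw_len, hlw_wp⟩ := subword_right hadd hb_wp hb_len
  have hvvw : sigma n v (v * w) ≠ 0 := by
    rw [hb_sig v]
    exact billeyWord_ne_zero hb_red (filter_nonempty_of_sublist hlv_sub hlv_len hlv_wp)
  have hwvw : sigma n w (v * w) ≠ 0 := by
    rw [hb_sig w]
    exact billeyWord_ne_zero hb_red (filter_nonempty_of_sublist hlw_sub hlw_len hlw_wp)
  have huvw : sigma n u (v * w) ≠ 0 := by
    rw [← h (v * w)]
    exact mul_ne_zero hvvw hwvw
  rw [hb_sig u] at huvw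
  obtain ⟨J, hJ⟩ : (Finset.univ.filter (fun J : Finset (Fin b.length) =>
      J.card = len n u ∧
        ((J.sort (· ≤ ·)).map (fun j => sTr n (b.get j))).prod = u)).Nonempty := by
    by_contra hemp
    rw [Finset.not_nonempty_iff_eq_empty] at hemp
    exact huvw (by rw [billeyWord, hemp, Finset.sum_empty])
  rw [Finset.mem_filter] at hJ
  obtain ⟨-, hJcard, hJprod⟩ := hJ
  have hJuniv : J = Finset.univ := by
    apply Finset.eq_univ_of_card
    rw [hJcard, Fintype.card_fin, hb_len, hadd, hlen_u]
  have hm := univ_mem_filter hb_wp hb_len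
  rw [Finset.mem_filter] at hm
  rw [hJuniv] at hJprod
  rw [← hJprod, hm.2.2]


end
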